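/- Let G be a finite simple graph and let k ≥ 4 be an even integer. A real number λ is a signless Laplacian H-eigenvalue of the generalized power hypergraph G^{k,k/2} if and only if there exists a nonempty subset U ⊆ V(G) such that the induced subgraph G[U] is connected and λ is an eigenvalue of the principal submatrix Q(G)[U] of the signless Laplacian matrix Q(G) = D(G) + A(G) of G. -/

import Mathlib

open Finset

/-- The edge set of the generalized power hypergraph `G^{k, k/2}` (with `s = k/2`):
each edge `{u,v}` of `G` is blown up into the `2s`-set `({u} × Fin s) ∪ ({v} × Fin s)`. -/
def powerEdges {V : Type*} [Fintype V] [DecidableEq V] (G : SimpleGraph V)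
    [DecidableRel G.Adj] (s : ℕ) : Finset (Finset (V × Fin s)) :=
  (Finset.univ.filter fun p : V × V => G.Adj p.1 p.2).image
    (fun p => ({p.1} ×ˢ (Finset.univ : Finset (Fin s)))
        ∪ ({p.2} ×ˢ (Finset.univ : Finset (Fin s))))

/-- `lam` is an adjacency H-eigenvalue of the generalized power hypergraph `G^{k,s}`
(`k = 2s`) with H-eigenvector `x`. -/
def IsAdjHEigPow {V : Type*} [Fintype V] [DecidableEq V] (G : SimpleGraph V)
    [DecidableRel G.Adj] (k s : ℕ) (lam : ℝ) (x : V × Fin s → ℝ) : Prop :=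
  x ≠ 0 ∧ ∀ p : V × Fin s,
    lam * x p ^ (k - 1)
      = ∑ e ∈ (powerEdges G s).filter (fun e => p ∈ e), ∏ w ∈ e.erase p, x w

/-- `lam` is a signless Laplacian H-eigenvalue of the generalized power hypergraph
`G^{k,s}` (`k = 2s`) with H-eigenvector `x`. -/
def IsQHEigPow {V : Type*} [Fintype V] [DecidableEq V] (G : SimpleGraph V)
    [DecidableRel G.Adj] (k s : ℕ) (lam : ℝ) (x : V × Fin s → ℝ) : Prop :=
  x ≠ 0 ∧ ∀ p : V × Fin s,
    lam * x p ^ (k - 1)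
      = (((powerEdges G s).filter (fun e => p ∈ e)).card : ℝ) * x p ^ (k - 1)
        + ∑ e ∈ (powerEdges G s).filter (fun e => p ∈ e), ∏ w ∈ e.erase p, x w

section Aux

set_option linter.unusedSectionVars false
set_option linter.unusedVariables false

variable {V : Type*} [Fintype V] [DecidableEq V] (G : SimpleGraph V) [DecidableRel G.Adj]

def pE (s : ℕ) (u v : V) : Finset (V × Fin s) :=
  ({u} ×ˢ (Finset.univ : Finset (Fin s))) ∪ ({v} ×ˢ (Finset.univ : Finset (Fin s)))

lemma mem_pE {s : ℕ} {u v w : V} {i : Fin s} : (w, i) ∈ pE s u v ↔ w = u ∨ w = v := by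
  simp [pE, eq_comm]

lemma filter_powerEdges (s : ℕ) (v : V) (i : Fin s) :
    (powerEdges G s).filter (fun e => (v, i) ∈ e)
      = (G.neighborFinset v).image (fun u => pE s v u) := by
  ext e
  simp only [powerEdges, mem_filter, mem_image, SimpleGraph.mem_neighborFinset]
  constructor
  · rintro ⟨⟨⟨a, b⟩, hab, rfl⟩, hmem⟩
    simp only [mem_filter, Finset.mem_univ, true_and] at hab
    rcases (mem_pE (u := a) (v := b)).1 hmem with rfl | rfl
    · exact ⟨b, hab, rfl⟩
    · exact ⟨a, hab.symm, (Finset.union_comm _ _)⟩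
  · rintro ⟨u, hu, rfl⟩
    refine ⟨⟨(v, u), by simpa using hu, rfl⟩, (mem_pE).2 (Or.inl rfl)⟩


set_option linter.unusedSectionVars false

lemma pE_injOn {s : ℕ} (hs : 1 ≤ s) (v : V) :
    Set.InjOn (fun u => pE s v u) (G.neighborFinset v : Set V) := by
  intro a ha b hb h
  simp only [Finset.coe_sort_coe, Finset.mem_coe, SimpleGraph.mem_neighborFinset] at ha hb
  have h' : pE s v a = pE s v b := h
  have hmem : ((a, (⟨0, hs⟩ : Fin s)) : V × Fin s) ∈ pE s v b := by
    rw [← h']; exact (mem_pE).2 (Or.inr rfl)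
  rcases (mem_pE).1 hmem with rfl | rfl
  · exact absurd ha (G.irrefl)
  · rfl

lemma card_filter_powerEdges {s : ℕ} (hs : 1 ≤ s) (v : V) (i : Fin s) :
    ((powerEdges G s).filter (fun e => (v, i) ∈ e)).card = G.degree v := by
  rw [filter_powerEdges, Finset.card_image_of_injOn (pE_injOn G hs v)]
  rfl

lemma prod_pE_erase {s : ℕ} {u v : V} (huv : v ≠ u) (x : V × Fin s → ℝ) (i : Fin s) :
    ∏ w ∈ (pE s v u).erase (v, i), x w
      = (∏ j ∈ Finset.univ.erase i, x (v, j)) * ∏ j, x (u, j) := by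
  have hd : Disjoint (({v} ×ˢ (Finset.univ : Finset (Fin s))).erase (v, i))
      ({u} ×ˢ (Finset.univ : Finset (Fin s))) := by
    rw [Finset.disjoint_left]
    rintro ⟨a, j⟩ ha hb
    simp only [Finset.mem_erase, Finset.mem_product, Finset.mem_singleton, Finset.mem_univ,
      and_true] at ha hb
    subst hb
    exact huv ha.2.symm
  have he : (pE s v u).erase (v, i)
      = (({v} ×ˢ (Finset.univ : Finset (Fin s))).erase (v, i))
        ∪ ({u} ×ˢ (Finset.univ : Finset (Fin s))) := by
    rw [pE, Finset.erase_union_distrib]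
    congr 1
    rw [Finset.erase_eq_self]
    simp [Ne.symm huv]
  rw [he, Finset.prod_union hd]
  congr 1
  · have : (({v} ×ˢ (Finset.univ : Finset (Fin s))).erase (v, i))
        = {v} ×ˢ (Finset.univ.erase i) := by
      ext ⟨a, j⟩
      simp only [Finset.mem_erase, Finset.mem_product, Finset.mem_singleton, Finset.mem_univ,
        and_true, Prod.mk.injEq, not_and]
      constructor
      · rintro ⟨h1, rfl⟩
        refine ⟨rfl, fun hj => h1 ?_⟩
        rw [hj]
      · rintro ⟨rfl, h2⟩
        exact ⟨fun hp => h2 (by simpa using congrArg Prod.snd hp), rfl⟩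
    rw [this, Finset.prod_product]
    simp
  · rw [Finset.prod_product]
    simp

lemma sum_filter_powerEdges {s : ℕ} (x : V × Fin s → ℝ) (v : V) (i : Fin s) :
    ∑ e ∈ (powerEdges G s).filter (fun e => (v, i) ∈ e), ∏ w ∈ e.erase (v, i), x w
      = (∏ j ∈ Finset.univ.erase i, x (v, j))
        * ∑ u ∈ G.neighborFinset v, ∏ j, x (u, j) := by
  have hs : 1 ≤ s := Nat.pos_of_ne_zero (fun h => absurd i.2 (by omega))
  rw [filter_powerEdges, Finset.sum_image (fun a ha b hb h => pE_injOn G hs v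
    (by simpa using ha) (by simpa using hb) h), Finset.mul_sum]
  refine Finset.sum_congr rfl fun u hu => ?_
  exact prod_pE_erase (fun h => G.irrefl (h ▸ (SimpleGraph.mem_neighborFinset _ _ _).1 hu)) x i

lemma QHE_iff {k s : ℕ} (hk : 4 ≤ k) (hks : k = 2 * s) (lam : ℝ) (x : V × Fin s → ℝ) :
    IsQHEigPow G k s lam x ↔ x ≠ 0 ∧ ∀ (v : V) (i : Fin s),
      lam * x (v, i) ^ (k - 1)
        = (G.degree v : ℝ) * x (v, i) ^ (k - 1)
          + (∏ j ∈ Finset.univ.erase i, x (v, j))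
            * ∑ u ∈ G.neighborFinset v, ∏ j, x (u, j) := by
  have hs : 1 ≤ s := by omega
  constructor
  · rintro ⟨h0, h⟩
    refine ⟨h0, fun v i => ?_⟩
    have := h (v, i)
    rwa [card_filter_powerEdges G hs, sum_filter_powerEdges] at this
  · rintro ⟨h0, h⟩
    refine ⟨h0, fun p => ?_⟩
    obtain ⟨v, i⟩ := p
    rw [card_filter_powerEdges G hs, sum_filter_powerEdges]
    exact h v i

lemma backward_dir {k s : ℕ} (hk : 4 ≤ k) (hks : k = 2 * s) (lam : ℝ)
    (U : Finset V) (hU : U.Nonempty)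
    (y : {v : V // v ∈ U} → ℝ) (hy0 : y ≠ 0)
    (hmul : (Matrix.of fun u w : {v : V // v ∈ U} =>
        (if u.1 = w.1 then (G.degree u.1 : ℝ) else 0)
          + (if G.Adj u.1 w.1 then (1 : ℝ) else 0)).mulVec y = lam • y) :
    ∃ x : V × Fin s → ℝ, IsQHEigPow G k s lam x := by
  classical
  have hs : 2 ≤ s := by omega
  have hs0 : (s : ℝ) ≠ 0 := by positivity
  set yext : V → ℝ := fun v => if h : v ∈ U then y ⟨v, h⟩ else 0 with hyext
  set r : V → ℝ := fun v => |yext v| ^ ((s : ℝ)⁻¹) with hr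
  have hrnn : ∀ v, 0 ≤ r v := fun v => Real.rpow_nonneg (abs_nonneg _) _
  have hrpow : ∀ v, r v ^ s = |yext v| := by
    intro v
    rw [hr]
    rw [← Real.rpow_natCast (|yext v| ^ ((s : ℝ)⁻¹)) s, ← Real.rpow_mul (abs_nonneg _),
      inv_mul_cancel₀ hs0, Real.rpow_one]
  set i0 : Fin s := ⟨0, by omega⟩ with hi0
  set x : V × Fin s → ℝ := fun p =>
    if p.1 ∈ U then (if yext p.1 < 0 ∧ p.2 = i0 then -(r p.1) else r p.1) else 0 with hx
  -- x vanishes off U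
  have hxoff : ∀ v, v ∉ U → ∀ j : Fin s, x (v, j) = 0 := by
    intro v hv j; simp [hx, hv]
  -- squares
  have hxsq : ∀ v (j : Fin s), x (v, j) ^ 2 = r v ^ 2 := by
    intro v j
    by_cases hv : v ∈ U
    · simp only [hx, hv, if_true]
      split <;> simp [neg_sq]
    · simp only [hx, hv, if_false]
      have : r v = 0 := by
        simp [hr, hyext, hv, Real.zero_rpow (inv_ne_zero hs0)]
      simp [this]
  -- full product
  have hprod : ∀ v, ∏ j, x (v, j) = yext v := by
    intro v
    by_cases hv : v ∈ U
    · have hsplit : ∏ j, x (v, j) = x (v, i0) * ∏ j ∈ Finset.univ.erase i0, x (v, j) :=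
        (Finset.mul_prod_erase _ _ (Finset.mem_univ i0)).symm
      have herase : ∏ j ∈ Finset.univ.erase i0, x (v, j) = r v ^ (s - 1) := by
        rw [Finset.prod_congr rfl (fun j hj => ?_), Finset.prod_const,
          Finset.card_erase_of_mem (Finset.mem_univ i0), Finset.card_univ, Fintype.card_fin]
        have hj' : j ≠ i0 := (Finset.mem_erase.1 hj).1
        simp [hx, hv, hj']
      by_cases hneg : yext v < 0
      · have : x (v, i0) = -(r v) := by simp [hx, hv, hneg]
        rw [hsplit, this, herase, neg_mul, ← pow_succ']
        have : s - 1 + 1 = s := by omega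
        rw [this, hrpow, abs_of_neg hneg, neg_neg]
      · have : x (v, i0) = r v := by simp [hx, hv, hneg]
        rw [hsplit, this, herase, ← pow_succ']
        have h1 : s - 1 + 1 = s := by omega
        rw [h1, hrpow, abs_of_nonneg (not_lt.1 hneg)]
    · rw [Finset.prod_eq_zero (Finset.mem_univ i0) (hxoff v hv i0)]
      simp [hyext, hv]
  -- key identity
  have hkey : ∀ v (i : Fin s),
      x (v, i) ^ (k - 1) = (∏ j ∈ Finset.univ.erase i, x (v, j)) * yext v := by
    intro v i
    by_cases hz : x (v, i) = 0
    · have hrz : r v = 0 := by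
        have h := hxsq v i
        rw [hz] at h
        have h2 : r v ^ 2 = 0 := by simpa using h.symm
        exact pow_eq_zero_iff two_ne_zero |>.1 h2
      have hyz : yext v = 0 := by
        have h := hrpow v
        rw [hrz] at h
        have : |yext v| = 0 := by simpa [zero_pow (show s ≠ 0 by omega)] using h.symm
        exact abs_eq_zero.1 this
      rw [hz, hyz, zero_pow (by omega : k - 1 ≠ 0), mul_zero]
    · apply mul_right_cancel₀ hz
      have h1 : x (v, i) ^ (k - 1) * x (v, i) = x (v, i) ^ k := by
        rw [← pow_succ]
        congr 1
        omega
      have h2 : (∏ j ∈ Finset.univ.erase i, x (v, j)) * yext v * x (v, i)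
          = (∏ j, x (v, j)) * yext v := by
        rw [mul_right_comm, Finset.prod_erase_mul _ _ (Finset.mem_univ i)]
      rw [h1, h2, hprod]
      calc x (v, i) ^ k = (x (v, i) ^ 2) ^ s := by rw [hks, pow_mul]
        _ = (r v ^ 2) ^ s := by rw [hxsq]
        _ = (r v ^ s) ^ 2 := by rw [← pow_mul, mul_comm, pow_mul]
        _ = yext v * yext v := by rw [hrpow, sq_abs, sq]
  -- nonzero
  refine ⟨x, (QHE_iff G hk hks lam x).2 ⟨?_, ?_⟩⟩
  · obtain ⟨u0, hu0⟩ := Function.ne_iff.1 hy0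
    intro hxz
    apply hu0
    have h0 : yext u0.1 = 0 := by
      rw [← hprod u0.1]
      exact Finset.prod_eq_zero (Finset.mem_univ i0) (congrFun hxz _)
    have : y u0 = 0 := by simpa [hyext] using h0
    simpa using this
  · intro v i
    by_cases hv : v ∈ U
    · -- neighbor sum
      have hnb : ∑ u ∈ G.neighborFinset v, ∏ j, x (u, j)
          = (lam - G.degree v) * yext v := by
        have hstep : ∑ u ∈ G.neighborFinset v, ∏ j, x (u, j)
            = ∑ w : {v' : V // v' ∈ U}, (if G.Adj v w.1 then (1 : ℝ) else 0) * y w := by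
          rw [Finset.sum_congr rfl (fun u _ => hprod u)]
          have h1 : ∑ u ∈ G.neighborFinset v, yext u
              = ∑ u, (if G.Adj v u then (1 : ℝ) else 0) * yext u := by
            rw [SimpleGraph.neighborFinset_eq_filter, Finset.sum_filter]
            exact Finset.sum_congr rfl (fun u _ => by split <;> simp)
          rw [h1, ← Finset.sum_subset (Finset.subset_univ U)
              (fun u _ hu => by simp [hyext, hu]),
            ← Finset.sum_coe_sort U (fun u => (if G.Adj v u then (1 : ℝ) else 0) * yext u)]
          refine Finset.sum_congr rfl (fun w _ => ?_)
          congr 1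
          simp [hyext, w.2]
        have hmv := congrFun hmul ⟨v, hv⟩
        simp only [Matrix.mulVec, Matrix.of_apply, dotProduct, Pi.smul_apply,
          smul_eq_mul] at hmv
        have hsplit : ∑ w : {v' : V // v' ∈ U},
              ((if v = w.1 then (G.degree v : ℝ) else 0)
                + (if G.Adj v w.1 then (1 : ℝ) else 0)) * y w
            = (G.degree v : ℝ) * y ⟨v, hv⟩
              + ∑ w : {v' : V // v' ∈ U}, (if G.Adj v w.1 then (1 : ℝ) else 0) * y w := by
          rw [Finset.sum_congr rfl (fun w _ => add_mul _ _ _), Finset.sum_add_distrib]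
          congr 1
          have hterm : ∀ w : {v' : V // v' ∈ U},
              (if v = w.1 then (G.degree v : ℝ) else 0) * y w
                = if (⟨v, hv⟩ : {v' : V // v' ∈ U}) = w then (G.degree v : ℝ) * y w else 0 := by
            intro w
            by_cases hw : (⟨v, hv⟩ : {v' : V // v' ∈ U}) = w
            · rw [if_pos hw, if_pos (congrArg Subtype.val hw)]
            · rw [if_neg hw, if_neg (fun hc => hw (Subtype.ext hc)), zero_mul]
          rw [Finset.sum_congr rfl (fun w _ => hterm w), Finset.sum_ite_eq]
          simp
        rw [hstep]
        rw [hsplit] at hmv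
        have hyv : yext v = y ⟨v, hv⟩ := dif_pos hv
        rw [hyv]
        linarith
      rw [hnb, hkey v i]
      ring
    · have hximod : x (v, i) = 0 := hxoff v hv i
      have herz : ∏ j ∈ Finset.univ.erase i, x (v, j) = 0 := by
        obtain ⟨j, hj⟩ : ∃ j : Fin s, j ≠ i := by
          by_cases h : i = i0
          · refine ⟨⟨1, by omega⟩, fun hh => ?_⟩
            rw [h] at hh
            have := congrArg Fin.val hh
            simp [hi0] at this
          · exact ⟨i0, fun hh => h hh.symm⟩
        exact Finset.prod_eq_zero (Finset.mem_erase.2 ⟨hj, Finset.mem_univ j⟩) (hxoff v hv j)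
      rw [hximod, herz, zero_pow (by omega : k - 1 ≠ 0)]
      ring

lemma induce_singleton_connected (v : V) :
    (G.induce (({v} : Finset V) : Set V)).Connected := by
  rw [SimpleGraph.connected_iff]
  refine ⟨?_, ⟨⟨v, by simp⟩⟩⟩
  · intro a b
    have : a = b := by
      apply Subtype.ext
      have ha := a.2
      have hb := b.2
      simp only [Finset.coe_singleton, Set.mem_singleton_iff] at ha hb
      rw [ha, hb]
    rw [this]

lemma caseA {k s : ℕ} (hk : 4 ≤ k) (hks : k = 2 * s) (lam : ℝ) (x : V × Fin s → ℝ)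
    (heq : ∀ (v : V) (i : Fin s),
      lam * x (v, i) ^ (k - 1)
        = (G.degree v : ℝ) * x (v, i) ^ (k - 1)
          + (∏ j ∈ Finset.univ.erase i, x (v, j))
            * ∑ u ∈ G.neighborFinset v, ∏ j, x (u, j))
    (v : V) (i j : Fin s) (hi : x (v, i) ≠ 0) (hj : x (v, j) = 0) :
    ∃ U : Finset V, U.Nonempty ∧ (G.induce (U : Set V)).Connected ∧
      ∃ y : {v : V // v ∈ U} → ℝ, y ≠ 0 ∧
        (Matrix.of fun u w : {v : V // v ∈ U} =>
            (if u.1 = w.1 then (G.degree u.1 : ℝ) else 0)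
              + (if G.Adj u.1 w.1 then (1 : ℝ) else 0)).mulVec y = lam • y := by
  have hij : j ≠ i := fun h => hi (h ▸ hj)
  have hzero : ∏ j' ∈ Finset.univ.erase i, x (v, j') = 0 :=
    Finset.prod_eq_zero (Finset.mem_erase.2 ⟨hij, Finset.mem_univ j⟩) hj
  have hlam : lam = G.degree v := by
    have h := heq v i
    rw [hzero, zero_mul, add_zero] at h
    exact mul_right_cancel₀ (pow_ne_zero _ hi) h
  refine ⟨{v}, ⟨v, by simp⟩, induce_singleton_connected G v, fun _ => 1, ?_, ?_⟩
  · intro h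
    simpa using congrFun h ⟨v, by simp⟩
  · haveI : Unique {u // u ∈ ({v} : Finset V)} :=
      ⟨⟨⟨v, by simp⟩⟩, fun w => Subtype.ext (Finset.mem_singleton.mp w.2)⟩
    funext w
    have hw : w = ⟨v, by simp⟩ := Subsingleton.elim _ _
    simp only [Matrix.mulVec, Matrix.of_apply, dotProduct, Pi.smul_apply, smul_eq_mul]
    rw [Fintype.sum_unique]
    have hd : (default : {u // u ∈ ({v} : Finset V)}) = ⟨v, by simp⟩ := Subsingleton.elim _ _
    rw [hw, hd]
    simp [G.irrefl, hlam]

lemma caseB {k s : ℕ} (hk : 4 ≤ k) (hks : k = 2 * s) (lam : ℝ) (x : V × Fin s → ℝ)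
    (hx0 : x ≠ 0)
    (heq : ∀ (v : V) (i : Fin s),
      lam * x (v, i) ^ (k - 1)
        = (G.degree v : ℝ) * x (v, i) ^ (k - 1)
          + (∏ j ∈ Finset.univ.erase i, x (v, j))
            * ∑ u ∈ G.neighborFinset v, ∏ j, x (u, j))
    (hB : ∀ v : V, (∃ i, x (v, i) ≠ 0) → ∀ j, x (v, j) ≠ 0) :
    ∃ U : Finset V, U.Nonempty ∧ (G.induce (U : Set V)).Connected ∧
      ∃ y : {v : V // v ∈ U} → ℝ, y ≠ 0 ∧
        (Matrix.of fun u w : {v : V // v ∈ U} =>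
            (if u.1 = w.1 then (G.degree u.1 : ℝ) else 0)
              + (if G.Adj u.1 w.1 then (1 : ℝ) else 0)).mulVec y = lam • y := by
  classical
  have hs : 2 ≤ s := by omega
  set P : V → ℝ := fun v => ∏ j, x (v, j) with hP
  set S : Finset V := Finset.univ.filter (fun v => ∀ i, x (v, i) ≠ 0) with hSdef
  have hPS : ∀ v ∈ S, P v ≠ 0 := by
    intro v hv
    exact Finset.prod_ne_zero_iff.2 fun j _ => (Finset.mem_filter.1 hv).2 j
  have hPnS : ∀ v, v ∉ S → P v = 0 := by
    intro v hv
    have : ¬ ∀ i, x (v, i) ≠ 0 := fun h => hv (Finset.mem_filter.2 ⟨Finset.mem_univ v, h⟩)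
    push_neg at this
    obtain ⟨i, hi⟩ := this
    exact Finset.prod_eq_zero (Finset.mem_univ i) hi
  -- key relation on S
  have hrel : ∀ v ∈ S, (lam - (G.degree v : ℝ)) * P v
      = ∑ u ∈ G.neighborFinset v, P u := by
    intro v hv
    set Sig0 := ∑ u ∈ G.neighborFinset v, P u with hSig0
    have hmulI : ∀ i : Fin s, (lam - (G.degree v : ℝ)) * x (v, i) ^ k = P v * Sig0 := by
      intro i
      have e1 : lam * x (v, i) ^ (k - 1) * x (v, i)
          = ((G.degree v : ℝ) * x (v, i) ^ (k - 1)
            + (∏ j ∈ Finset.univ.erase i, x (v, j)) * Sig0) * x (v, i) := by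
        rw [heq v i]
      have hk1 : k - 1 + 1 = k := by omega
      have e2 : lam * x (v, i) ^ k
          = (G.degree v : ℝ) * x (v, i) ^ k + P v * Sig0 := by
        calc lam * x (v, i) ^ k = lam * x (v, i) ^ (k - 1) * x (v, i) := by
              rw [mul_assoc, ← pow_succ, hk1]
          _ = ((G.degree v : ℝ) * x (v, i) ^ (k - 1)
                + (∏ j ∈ Finset.univ.erase i, x (v, j)) * Sig0) * x (v, i) := e1
          _ = (G.degree v : ℝ) * x (v, i) ^ k + P v * Sig0 := by
              rw [add_mul, mul_assoc, ← pow_succ, hk1, mul_right_comm,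
                Finset.prod_erase_mul _ _ (Finset.mem_univ i)]
      linarith [e2]
    by_cases hld : lam = (G.degree v : ℝ)
    · have h0 : P v * Sig0 = 0 := by
        have h := hmulI ⟨0, by omega⟩
        rw [hld] at h
        simpa using h.symm
      have : Sig0 = 0 := by
        rcases mul_eq_zero.1 h0 with h | h
        · exact absurd h (hPS v hv)
        · exact h
      rw [hld, this, sub_self, zero_mul]
    · have hldne : lam - (G.degree v : ℝ) ≠ 0 := sub_ne_zero.2 hld
      -- all x (v, i) ^ k equal
      set i₀ : Fin s := ⟨0, by omega⟩ with hi₀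
      have hxk : ∀ i : Fin s, x (v, i) ^ k = x (v, i₀) ^ k := by
        intro i
        apply mul_left_cancel₀ hldne
        rw [hmulI i, hmulI i₀]
      have hxsq : ∀ i : Fin s, x (v, i) ^ 2 = x (v, i₀) ^ 2 := by
        intro i
        have h1 : (x (v, i) ^ 2) ^ s = (x (v, i₀) ^ 2) ^ s := by
          rw [← pow_mul, ← pow_mul, ← hks, hxk i]
        exact pow_left_strictMonoOn₀ (by omega : s ≠ 0) |>.injOn (show 0 ≤ x (v, i) ^ 2 from sq_nonneg _)
          (show 0 ≤ x (v, i₀) ^ 2 from sq_nonneg _) h1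
      have hPsq : P v ^ 2 = x (v, i₀) ^ k := by
        rw [hP]
        rw [← Finset.prod_pow]
        rw [Finset.prod_congr rfl (fun j _ => hxsq j), Finset.prod_const, Finset.card_univ,
          Fintype.card_fin, ← pow_mul, ← hks]
      apply mul_right_cancel₀ (hPS v hv)
      have h2 := hmulI i₀
      rw [← hPsq] at h2
      calc (lam - (G.degree v : ℝ)) * P v * P v
          = (lam - (G.degree v : ℝ)) * P v ^ 2 := by ring
        _ = P v * Sig0 := h2
        _ = Sig0 * P v := by ring
  -- the connected component
  obtain ⟨p0, hv0x⟩ := Function.ne_iff.1 hx0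
  obtain ⟨v0, iw⟩ := p0
  have hv0S : v0 ∈ S := Finset.mem_filter.2 ⟨Finset.mem_univ _,
    hB v0 ⟨iw, by simpa using hv0x⟩⟩
  set Rstep : V → V → Prop := fun a b => G.Adj a b ∧ a ∈ S ∧ b ∈ S with hRstep
  set U : Finset V := Finset.univ.filter
    (fun v => v ∈ S ∧ Relation.ReflTransGen Rstep v0 v) with hUdef
  have hUS : ∀ v ∈ U, v ∈ S := fun v hv => (Finset.mem_filter.1 hv).2.1
  have hv0U : v0 ∈ U := Finset.mem_filter.2 ⟨Finset.mem_univ _, hv0S, Relation.ReflTransGen.refl⟩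
  have hclose : ∀ v ∈ U, ∀ u, u ∈ S → G.Adj v u → u ∈ U := by
    intro v hv u huS hadj
    obtain ⟨-, hvS, hR⟩ := Finset.mem_filter.1 hv
    exact Finset.mem_filter.2 ⟨Finset.mem_univ _, huS,
      hR.tail ⟨hadj, hvS, huS⟩⟩
  -- reachability within the induced graph
  have hreach : ∀ v, Relation.ReflTransGen Rstep v0 v →
      ∀ (h : v ∈ ((U : Finset V) : Set V)),
        (G.induce ((U : Finset V) : Set V)).Reachable ⟨v0, by simpa using hv0U⟩ ⟨v, h⟩ := by
    intro v hv
    induction hv with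
    | refl => intro h; rfl
    | @tail b c hR hstep ih =>
        intro h
        have hbU : b ∈ U := Finset.mem_filter.2 ⟨Finset.mem_univ _, hstep.2.1, hR⟩
        have hbU' : b ∈ ((U : Finset V) : Set V) := by simpa using hbU
        refine (ih hbU').trans ?_
        exact SimpleGraph.Adj.reachable (by exact hstep.1 :
          (G.induce ((U : Finset V) : Set V)).Adj ⟨b, hbU'⟩ ⟨c, h⟩)
  have hconn : (G.induce ((U : Finset V) : Set V)).Connected := by
    rw [SimpleGraph.connected_iff]
    refine ⟨?_, ⟨⟨v0, by simpa using hv0U⟩⟩⟩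
    intro a b
    obtain ⟨a1, ha⟩ := a
    obtain ⟨b1, hb⟩ := b
    have haU : a1 ∈ U := by simpa using ha
    have hbU : b1 ∈ U := by simpa using hb
    have hra := hreach a1 (Finset.mem_filter.1 haU).2.2 ha
    have hrb := hreach b1 (Finset.mem_filter.1 hbU).2.2 hb
    exact hra.symm.trans hrb
  -- the eigenvector
  refine ⟨U, ⟨v0, hv0U⟩, hconn, fun w => P w.1, ?_, ?_⟩
  · intro h
    exact hPS v0 hv0S (by simpa using congrFun h ⟨v0, hv0U⟩)
  · funext w
    obtain ⟨v, hvU⟩ := w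
    have hvS : v ∈ S := hUS v hvU
    -- neighbor sum identity
    have hnb : ∑ u ∈ G.neighborFinset v, P u
        = ∑ u : {v' : V // v' ∈ U}, (if G.Adj v u.1 then (1 : ℝ) else 0) * P u.1 := by
      have h1 : ∑ u ∈ G.neighborFinset v, P u
          = ∑ u, (if G.Adj v u then (1 : ℝ) else 0) * P u := by
        rw [SimpleGraph.neighborFinset_eq_filter, Finset.sum_filter]
        exact Finset.sum_congr rfl (fun u _ => by split <;> simp)
      rw [h1, ← Finset.sum_subset (Finset.subset_univ U) (fun u _ hu => ?_),
        ← Finset.sum_coe_sort U (fun u => (if G.Adj v u then (1 : ℝ) else 0) * P u)]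
      -- vanishing off U
      by_cases hadj : G.Adj v u
      · by_cases huS : u ∈ S
        · exact absurd (hclose v hvU u huS hadj) hu
        · rw [hPnS u huS, mul_zero]
      · simp [hadj]
    simp only [Matrix.mulVec, Matrix.of_apply, dotProduct, Pi.smul_apply, smul_eq_mul]
    have hsplit : ∑ u : {v' : V // v' ∈ U},
          ((if v = u.1 then (G.degree v : ℝ) else 0)
            + (if G.Adj v u.1 then (1 : ℝ) else 0)) * P u.1
        = (G.degree v : ℝ) * P v
          + ∑ u : {v' : V // v' ∈ U}, (if G.Adj v u.1 then (1 : ℝ) else 0) * P u.1 := by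
      rw [Finset.sum_congr rfl (fun u _ => add_mul _ _ _), Finset.sum_add_distrib]
      congr 1
      have hterm : ∀ u : {v' : V // v' ∈ U},
          (if v = u.1 then (G.degree v : ℝ) else 0) * P u.1
            = if (⟨v, hvU⟩ : {v' : V // v' ∈ U}) = u then (G.degree v : ℝ) * P u.1 else 0 := by
        intro u
        by_cases hu : (⟨v, hvU⟩ : {v' : V // v' ∈ U}) = u
        · rw [if_pos hu, if_pos (congrArg Subtype.val hu)]
        · rw [if_neg hu, if_neg (fun hc => hu (Subtype.ext hc)), zero_mul]
      rw [Finset.sum_congr rfl (fun u _ => hterm u), Finset.sum_ite_eq]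
      simp
    rw [hsplit, ← hnb, ← hrel v hvS]
    ring

end Aux

/-- `λ` is a signless Laplacian H-eigenvalue of `G^{k,k/2}` iff there is a
nonempty `U ⊆ V(G)` with `G[U]` connected such that `λ` is an eigenvalue of the principal
submatrix `Q(G)[U]` of the signless Laplacian matrix `Q(G) = D(G) + A(G)` of `G`. -/
theorem stmt14 {V : Type*} [Fintype V] [DecidableEq V] (G : SimpleGraph V)
    [DecidableRel G.Adj] (k s : ℕ) (hk : 4 ≤ k) (hks : k = 2 * s) (lam : ℝ) :
    (∃ x : V × Fin s → ℝ, IsQHEigPow G k s lam x) ↔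
    ∃ U : Finset V, U.Nonempty ∧ (G.induce (U : Set V)).Connected ∧
      ∃ y : {v : V // v ∈ U} → ℝ, y ≠ 0 ∧
        (Matrix.of fun u w : {v : V // v ∈ U} =>
            (if u.1 = w.1 then (G.degree u.1 : ℝ) else 0)
              + (if G.Adj u.1 w.1 then (1 : ℝ) else 0)).mulVec y = lam • y := by
  constructor
  · rintro ⟨x, hx⟩
    obtain ⟨hx0, heq⟩ := (QHE_iff G hk hks lam x).1 hx
    by_cases hA : ∃ v : V, (∃ i, x (v, i) ≠ 0) ∧ (∃ j, x (v, j) = 0)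
    · obtain ⟨v, ⟨i, hi⟩, ⟨j, hj⟩⟩ := hA
      exact caseA G hk hks lam x heq v i j hi hj
    · push_neg at hA
      refine caseB G hk hks lam x hx0 heq (fun v hv j => ?_)
      obtain ⟨i, hi⟩ := hv
      exact hA v ⟨i, hi⟩ j
  · rintro ⟨U, hU, -, y, hy0, hmul⟩
    exact backward_dir G hk hks lam U hU y hy0 hmul
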